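/- Assume: (1) X_i∘E = E∘X_i and X_i∘F = F∘X_i for all 1 ≤ i ≤ t; (2) F is injective and each X_i is injective; (3) for every n⃗ ∈ ℤ^t the set {m ∈ ℤ : M_{(m,n⃗)} ≠ 0} is bounded above; (4) there exist positive integers s_1 < s_2 < ⋯ such that M_{(s_n,(s_n+1,…,s_n+1))} ≠ 0 for all n ≥ 1. Then the dimensions of the homogeneous components of M are unbounded: for every N ∈ ℕ there exist m ∈ ℤ and n⃗ ∈ ℤ^t with dim_ℂ M_{(m,n⃗)} ≥ N. (Operator-theoretic form of the paper's key unboundedness theorem, proved via sl₂ Casimir eigenvalue analysis.) -/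

import Mathlib

/-- Operator-theoretic form of the paper's key unboundedness theorem (Theorem 3.4),
proved via the `sl₂` Casimir eigenvalue analysis: for a `ℤ × ℤᵗ`-graded complex
vector space `M` with finite-dimensional components, carrying operators `E`, `F`
(raising/lowering the first degree, with `[E,F]` acting on the `(m,n⃗)`-component
as the scalar `c₀ + 2m`) and injective operators `X₁, …, X_t` (raising the other
degrees) commuting with `E` and `F`, if `F` is injective, for every `n⃗` the set of
first degrees of nonzero components is bounded above, and there are positive integers
`s₁ < s₂ < ⋯` with `M_{(sₙ, (sₙ+1,…,sₙ+1))} ≠ 0`, then the dimensions of the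
components of `M` are unbounded. -/
theorem unbounded_multiplicities
    (t : ℕ) (ht : 0 < t) (c₀ : ℂ)
    (M : Type*) [AddCommGroup M] [Module ℂ M]
    (W : ℤ × (Fin t → ℤ) → Submodule ℂ M)
    (hinternal : DirectSum.IsInternal W)
    (hfd : ∀ p, FiniteDimensional ℂ (W p))
    (E F : M →ₗ[ℂ] M) (X : Fin t → (M →ₗ[ℂ] M))
    (hE : ∀ (m : ℤ) (n : Fin t → ℤ), ∀ v ∈ W (m, n), E v ∈ W (m + 1, n))
    (hF : ∀ (m : ℤ) (n : Fin t → ℤ), ∀ v ∈ W (m, n), F v ∈ W (m - 1, n))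
    (hX : ∀ (i : Fin t) (m : ℤ) (n : Fin t → ℤ), ∀ v ∈ W (m, n),
      X i v ∈ W (m, n + Pi.single i 1))
    (hcomm : ∀ (m : ℤ) (n : Fin t → ℤ), ∀ v ∈ W (m, n),
      E (F v) - F (E v) = (c₀ + 2 * (m : ℂ)) • v)
    (hXE : ∀ i, (X i).comp E = E.comp (X i))
    (hXF : ∀ i, (X i).comp F = F.comp (X i))
    (hFinj : Function.Injective F)
    (hXinj : ∀ i, Function.Injective (X i))
    (hbdd : ∀ n : Fin t → ℤ, BddAbove {m : ℤ | W (m, n) ≠ ⊥})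
    (s : ℕ → ℤ) (hs : StrictMono s) (hspos : ∀ j, 0 < s j)
    (hnz : ∀ j, W (s j, fun _ => s j + 1) ≠ ⊥) :
    ∀ N : ℕ, ∃ (m : ℤ) (n : Fin t → ℤ), N ≤ Module.finrank ℂ (W (m, n)) := by
  classical
  -- the Casimir-related operator
  set A : Module.End ℂ M := F ∘ₗ E with hAdef
  -- the quadratic weight function
  set q : ℤ → ℂ := fun m => (m : ℂ) ^ 2 + (c₀ + 1) * (m : ℂ) with hqdef
  have hqstep : ∀ m : ℤ, q m - q (m - 1) = c₀ + 2 * (m : ℂ) := by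
    intro m; simp only [hqdef]; push_cast; ring
  -- A preserves the components
  have hAW : ∀ (m : ℤ) (n : Fin t → ℤ), ∀ v ∈ W (m, n), A v ∈ W (m, n) := by
    intro m n v hv
    have h1 := hF (m + 1) n _ (hE m n v hv)
    simp at h1
    exact h1
  -- commutation relations
  have hAF : ∀ (m : ℤ) (n : Fin t → ℤ), ∀ v ∈ W (m, n),
      A (F v) = F (A v) + (c₀ + 2 * (m : ℂ)) • F v := by
    intro m n v hv
    have h1 := hcomm m n v hv
    have h2 : E (F v) = F (E v) + (c₀ + 2 * (m : ℂ)) • v := by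
      rw [← h1]; abel
    show F (E (F v)) = F (F (E v)) + (c₀ + 2 * (m : ℂ)) • F v
    rw [h2, map_add, map_smul]
  have hAE : ∀ (m : ℤ) (n : Fin t → ℤ), ∀ v ∈ W (m, n),
      A (E v) = E (A v) - (c₀ + 2 * ((m : ℂ) + 1)) • E v := by
    intro m n v hv
    have h1 := hcomm (m + 1) n (E v) (hE m n v hv)
    push_cast at h1
    show F (E (E v)) = E (F (E v)) - (c₀ + 2 * ((m : ℂ) + 1)) • E v
    rw [← h1]; abel
  have hAX : ∀ (i : Fin t) (v : M), A (X i v) = X i (A v) := by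
    intro i v
    have h1 := LinearMap.congr_fun (hXE i) v
    have h2 := LinearMap.congr_fun (hXF i) (E v)
    simp only [LinearMap.comp_apply] at h1 h2
    show F (E (X i v)) = X i (F (E v))
    rw [h2, h1]
  -- one-step transport of generalized eigenvectors along F
  have hFonestep : ∀ (m : ℤ) (n : Fin t → ℤ) (lam : ℂ), ∀ v ∈ W (m, n),
      (A - (lam + (c₀ + 2 * (m : ℂ))) • 1) (F v) = F ((A - lam • 1) v) := by
    intro m n lam v hv
    simp only [LinearMap.sub_apply, LinearMap.smul_apply, Module.End.one_apply, map_sub, map_smul]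
    rw [hAF m n v hv]
    module
  -- iterated transport along F
  have hFgenk : ∀ (m : ℤ) (n : Fin t → ℤ) (lam : ℂ) (k : ℕ), ∀ v ∈ W (m, n),
      ((A - (lam + (c₀ + 2 * (m : ℂ))) • 1) ^ k) (F v) = F (((A - lam • 1) ^ k) v) := by
    intro m n lam k
    induction k with
    | zero => intro v hv; simp
    | succ k ih =>
      intro v hv
      have hv' : (A - lam • 1) v ∈ W (m, n) := by
        have := hAW m n v hv
        simp only [LinearMap.sub_apply, LinearMap.smul_apply, Module.End.one_apply]
        exact Submodule.sub_mem _ this (Submodule.smul_mem _ _ hv)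
      rw [pow_succ, pow_succ]
      simp only [Module.End.mul_apply]
      rw [hFonestep m n lam v hv]
      exact ih _ hv'
  -- iterated transport along X i (global)
  have hXgenk : ∀ (i : Fin t) (lam : ℂ) (k : ℕ) (v : M),
      ((A - lam • 1) ^ k) (X i v) = X i (((A - lam • 1) ^ k) v) := by
    intro i lam k
    induction k with
    | zero => intro v; simp
    | succ k ih =>
      intro v
      rw [pow_succ]
      simp only [Module.End.mul_apply]
      have h1 : (A - lam • 1) (X i v) = X i ((A - lam • 1) v) := by
        simp only [LinearMap.sub_apply, LinearMap.smul_apply, Module.End.one_apply, map_sub,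
          map_smul, hAX]
      rw [h1, ih]
  -- transport of generalized eigenvectors along F (Casimir bookkeeping via q)
  have hGE_F : ∀ (m : ℤ) (n : Fin t → ℤ) (c : ℂ),
      (∃ v, v ≠ 0 ∧ v ∈ W (m, n) ∧ v ∈ A.maxGenEigenspace (c - q m)) →
      (∃ v, v ≠ 0 ∧ v ∈ W (m - 1, n) ∧ v ∈ A.maxGenEigenspace (c - q (m - 1))) := by
    rintro m n c ⟨v, hv0, hvW, hvG⟩
    refine ⟨F v, fun h => hv0 (hFinj (by simp [h])), hF m n v hvW, ?_⟩
    rw [Module.End.mem_maxGenEigenspace] at hvG ⊢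
    obtain ⟨k, hk⟩ := hvG
    refine ⟨k, ?_⟩
    have hc : c - q (m - 1) = (c - q m) + (c₀ + 2 * (m : ℂ)) := by
      rw [← hqstep m]; ring
    rw [hc, hFgenk m n (c - q m) k v hvW, hk, map_zero]
  -- iterated transport downwards
  have hGE_down : ∀ (m m' : ℤ) (n : Fin t → ℤ) (c : ℂ), m' ≤ m →
      (∃ v, v ≠ 0 ∧ v ∈ W (m, n) ∧ v ∈ A.maxGenEigenspace (c - q m)) →
      (∃ v, v ≠ 0 ∧ v ∈ W (m', n) ∧ v ∈ A.maxGenEigenspace (c - q m')) := by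
    intro m m' n c hle h
    have key : ∀ k : ℕ, ∃ v, v ≠ 0 ∧ v ∈ W (m - k, n) ∧
        v ∈ A.maxGenEigenspace (c - q (m - k)) := by
      intro k
      induction k with
      | zero => simpa using h
      | succ k ih =>
        have h2 := hGE_F (m - k) n c ih
        have he : m - ((k : ℤ) + 1) = (m - k) - 1 := by ring
        push_cast
        rw [he]
        exact h2
    have h3 := key (m - m').toNat
    have he : m - ((m - m').toNat : ℤ) = m' := by omega
    rwa [he] at h3
  -- transport along X i
  have hGE_X : ∀ (i : Fin t) (m : ℤ) (n : Fin t → ℤ) (c : ℂ),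
      (∃ v, v ≠ 0 ∧ v ∈ W (m, n) ∧ v ∈ A.maxGenEigenspace (c - q m)) →
      (∃ v, v ≠ 0 ∧ v ∈ W (m, n + Pi.single i 1) ∧ v ∈ A.maxGenEigenspace (c - q m)) := by
    rintro i m n c ⟨v, hv0, hvW, hvG⟩
    refine ⟨X i v, fun h => hv0 (hXinj i (by simp [h])), hX i m n v hvW, ?_⟩
    rw [Module.End.mem_maxGenEigenspace] at hvG ⊢
    obtain ⟨k, hk⟩ := hvG
    exact ⟨k, by rw [hXgenk, hk, map_zero]⟩
  -- transport by adding the all-ones vector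
  have hGE_ones : ∀ (m : ℤ) (n : Fin t → ℤ) (c : ℂ),
      (∃ v, v ≠ 0 ∧ v ∈ W (m, n) ∧ v ∈ A.maxGenEigenspace (c - q m)) →
      (∃ v, v ≠ 0 ∧ v ∈ W (m, n + fun _ => (1 : ℤ)) ∧ v ∈ A.maxGenEigenspace (c - q m)) := by
    intro m n c h
    have key : ∀ S : Finset (Fin t), ∃ v, v ≠ 0 ∧
        v ∈ W (m, n + ∑ i ∈ S, Pi.single i (1 : ℤ)) ∧
        v ∈ A.maxGenEigenspace (c - q m) := by
      intro S
      induction S using Finset.induction_on with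
      | empty => simpa using h
      | @insert a S ha ih =>
        obtain ⟨v, hv0, hvW, hvG⟩ := hGE_X a m _ c ih
        refine ⟨v, hv0, ?_, hvG⟩
        have hcol : n + ∑ i ∈ insert a S, Pi.single i (1 : ℤ)
            = (n + ∑ i ∈ S, Pi.single i (1 : ℤ)) + Pi.single a 1 := by
          rw [Finset.sum_insert ha]; abel
        rw [hcol]
        exact hvW
    obtain ⟨v, hv0, hvW, hvG⟩ := key Finset.univ
    refine ⟨v, hv0, ?_, hvG⟩
    have hcol : (∑ i : Fin t, Pi.single i (1 : ℤ)) = fun _ : Fin t => (1 : ℤ) :=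
      Finset.univ_sum_single (fun _ : Fin t => (1 : ℤ))
    rwa [hcol] at hvW
  -- transport by adding a constant vector
  have hGE_const : ∀ (k : ℕ) (m : ℤ) (n : Fin t → ℤ) (c : ℂ),
      (∃ v, v ≠ 0 ∧ v ∈ W (m, n) ∧ v ∈ A.maxGenEigenspace (c - q m)) →
      (∃ v, v ≠ 0 ∧ v ∈ W (m, n + fun _ => (k : ℤ)) ∧ v ∈ A.maxGenEigenspace (c - q m)) := by
    intro k
    induction k with
    | zero =>
      intro m n c h
      have hcol : (n + fun _ : Fin t => ((0 : ℕ) : ℤ)) = n := by funext x; simp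
      rwa [hcol]
    | succ k ih =>
      intro m n c h
      obtain ⟨v, hv0, hvW, hvG⟩ := hGE_ones m _ c (ih m n c h)
      refine ⟨v, hv0, ?_, hvG⟩
      have hcol : (n + fun _ : Fin t => ((k + 1 : ℕ) : ℤ))
          = (n + fun _ : Fin t => (k : ℤ)) + fun _ : Fin t => (1 : ℤ) := by
        funext x; simp [Pi.add_apply]; push_cast; ring
      rw [hcol]
      exact hvW
  -- eigenvalues of A on a component are of the form q μ - q m for μ ≥ m with W (μ, n) ≠ ⊥
  have hspec : ∀ (m : ℤ) (n : Fin t → ℤ) (v : M) (lam : ℂ), v ∈ W (m, n) → v ≠ 0 →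
      A v = lam • v → ∃ μ : ℤ, m ≤ μ ∧ W (μ, n) ≠ ⊥ ∧ lam = q μ - q m := by
    intro m n v lam hvW hv0 hAv
    set u : ℕ → M := fun k => (E ^ k) v with hu
    have hu1 : ∀ k : ℕ, u (k + 1) = E (u k) := by
      intro k
      show (E ^ (k + 1)) v = E ((E ^ k) v)
      rw [pow_succ']
      rfl
    have hmem : ∀ k : ℕ, u k ∈ W (m + k, n) := by
      intro k
      induction k with
      | zero => simpa [hu] using hvW
      | succ k ih =>
        have h2 := hE (m + k) n _ ih
        have he : m + ((k : ℤ) + 1) = (m + k) + 1 := by ring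
        rw [hu1 k]
        push_cast
        rw [he]
        exact h2
    have heig : ∀ k : ℕ, A (u k) = (lam - (q (m + k) - q m)) • u k := by
      intro k
      induction k with
      | zero =>
        have he : m + ((0 : ℕ) : ℤ) = m := by simp
        simp only [hu, pow_zero, Module.End.one_apply, he, sub_self, sub_zero]
        exact hAv
      | succ k ih =>
        rw [hu1 k]
        rw [hAE (m + k) n (u k) (hmem k), ih, map_smul]
        rw [← hu1 k]
        have hq2 := hqstep (m + k + 1)
        have hsc : lam - (q (m + k) - q m) - (c₀ + 2 * (((m + k : ℤ) : ℂ) + 1))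
            = lam - (q (m + ((k : ℕ) + 1 : ℕ)) - q m) := by
          simp only [hqdef]
          push_cast
          ring
        rw [← sub_smul, hsc]
    obtain ⟨b, hb⟩ := hbdd n
    have hzero : ∀ k : ℕ, (b - m).toNat + 1 ≤ k → u k = 0 := by
      intro k hk
      by_contra h0
      have hne : W (m + k, n) ≠ ⊥ := by
        intro hbot
        have h2 := hmem k
        rw [hbot] at h2
        exact h0 (by simpa using h2)
      have h3 : m + (k : ℤ) ≤ b := hb hne
      omega
    have hex : ∃ k : ℕ, u k ≠ 0 ∧ u (k + 1) = 0 := by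
      by_contra hcon
      push_neg at hcon
      have hall : ∀ k, u k ≠ 0 := by
        intro k
        induction k with
        | zero => simpa [hu] using hv0
        | succ k ih => exact hcon k ih
      exact hall _ (hzero ((b - m).toNat + 1) le_rfl)
    obtain ⟨k, hk0, hk1⟩ := hex
    have hzero2 : A (u k) = 0 := by
      show F (E (u k)) = 0
      rw [← hu1 k, hk1, map_zero]
    rw [heig k] at hzero2
    have hsc : lam - (q (m + k) - q m) = 0 := by
      rcases smul_eq_zero.mp hzero2 with h | h
      · exact h
      · exact absurd h hk0
    refine ⟨m + k, by omega, ?_, by linear_combination hsc⟩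
    intro hbot
    have h2 := hmem k
    rw [hbot] at h2
    exact hk0 (by simpa using h2)
  -- every nonzero component carries a generalized eigenvector with a string-top eigenvalue
  have hexists : ∀ (m : ℤ) (n : Fin t → ℤ), W (m, n) ≠ ⊥ →
      ∃ μ : ℤ, m ≤ μ ∧ W (μ, n) ≠ ⊥ ∧
        (∃ v, v ≠ 0 ∧ v ∈ W (m, n) ∧ v ∈ A.maxGenEigenspace (q μ - q m)) := by
    intro m n hne
    haveI := hfd (m, n)
    haveI : Nontrivial (W (m, n)) := Submodule.nontrivial_iff_ne_bot.mpr hne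
    set A' : Module.End ℂ (W (m, n)) := A.restrict (fun v hv => hAW m n v hv) with hA'
    obtain ⟨lam, hlam⟩ := Module.End.exists_eigenvalue A'
    obtain ⟨x, hx⟩ := hlam.exists_hasEigenvector
    have hx0 : (x : M) ≠ 0 := fun h => hx.right (by exact_mod_cast h)
    have hxe : A (x : M) = lam • (x : M) := by
      have h2 : A' x = lam • x := Module.End.mem_eigenspace_iff.mp hx.left
      have h3 := congrArg (Subtype.val) h2
      simpa [hA', LinearMap.restrict_apply] using h3
    obtain ⟨μ, hμ1, hμ2, hμ3⟩ := hspec m n (x : M) lam x.2 hx0 hxe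
    refine ⟨μ, hμ1, hμ2, (x : M), hx0, x.2, ?_⟩
    rw [Module.End.mem_maxGenEigenspace]
    refine ⟨1, ?_⟩
    simp only [pow_one, LinearMap.sub_apply, LinearMap.smul_apply, Module.End.one_apply]
    rw [hxe, ← hμ3, sub_self]
  -- injectivity of q on large integers
  set T : ℤ := ⌈|c₀.re|⌉ + 1 with hT
  have hqinj : ∀ a b : ℤ, T ≤ a → T ≤ b → q a = q b → a = b := by
    intro a b ha hb hqe
    by_contra hne
    have h1 : ((a : ℂ) - b) * ((a : ℂ) + b + c₀ + 1) = 0 := by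
      simp only [hqdef] at hqe
      linear_combination hqe
    rcases mul_eq_zero.mp h1 with h | h
    · apply hne
      have h2 : (a : ℂ) = b := by linear_combination h
      exact_mod_cast h2
    · have hre := congrArg Complex.re h
      simp only [Complex.add_re, Complex.intCast_re, Complex.one_re, Complex.zero_re] at hre
      have hTa : (T : ℝ) ≤ (a : ℝ) := by exact_mod_cast ha
      have hTb : (T : ℝ) ≤ (b : ℝ) := by exact_mod_cast hb
      have hc : |c₀.re| ≤ (⌈|c₀.re|⌉ : ℝ) := Int.le_ceil _
      have hc2 : -c₀.re ≤ |c₀.re| := neg_le_abs _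
      have hc3 : (0 : ℝ) ≤ |c₀.re| := abs_nonneg _
      have hT' : (T : ℝ) = (⌈|c₀.re|⌉ : ℝ) + 1 := by rw [hT]; push_cast; ring
      linarith
  -- growth of s
  have hsgrow : ∀ k : ℕ, s 0 + k ≤ s k := by
    intro k
    induction k with
    | zero => simp
    | succ k ih =>
      have h2 : s k < s (k + 1) := hs (by omega)
      omega
  have hschoose : ∀ (j₀ : ℕ) (B : ℤ), ∃ j, j₀ < j ∧ B < s j := by
    intro j₀ B
    refine ⟨max (j₀ + 1) ((B - s 0).toNat + 1), ?_, ?_⟩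
    · omega
    · have h1 := hsgrow (max (j₀ + 1) ((B - s 0).toNat + 1))
      have h2 : (B - s 0).toNat + 1 ≤ max (j₀ + 1) ((B - s 0).toNat + 1) := le_max_right _ _
      omega
  -- main induction: N independent generalized eigenvectors in a common component
  have main : ∀ N : ℕ, ∃ (j : ℕ) (B : ℤ) (μ : Fin N → ℤ),
      Function.Injective μ ∧ (∀ i, T ≤ μ i) ∧ (∀ i, μ i ≤ B) ∧
      ∀ i, ∃ v, v ≠ 0 ∧ v ∈ W (s 0, fun _ => s j + 1) ∧
        v ∈ A.maxGenEigenspace (q (μ i) - q (s 0)) := by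
    intro N
    induction N with
    | zero =>
      exact ⟨0, 0, Fin.elim0, fun i => i.elim0, fun i => i.elim0, fun i => i.elim0,
        fun i => i.elim0⟩
    | succ N ih =>
      obtain ⟨j, B, μ, hinj, hT1, hB, hGE⟩ := ih
      obtain ⟨j', hj', hsj'⟩ := hschoose j (max B T)
      obtain ⟨μ', hμ'ge, hμ'ne, hv'pack⟩ := hexists (s j') (fun _ => s j' + 1) (hnz j')
      obtain ⟨b', hb'⟩ := hbdd (fun _ => s j' + 1)
      have hμ'b : μ' ≤ b' := hb' hμ'ne
      have hnew : ∃ v, v ≠ 0 ∧ v ∈ W (s 0, fun _ => s j' + 1) ∧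
          v ∈ A.maxGenEigenspace (q μ' - q (s 0)) :=
        hGE_down (s j') (s 0) _ (q μ') (hs.monotone (Nat.zero_le j')) hv'pack
      have hold : ∀ i, ∃ v, v ≠ 0 ∧ v ∈ W (s 0, fun _ => s j' + 1) ∧
          v ∈ A.maxGenEigenspace (q (μ i) - q (s 0)) := by
        intro i
        have h0 := hGE i
        have hjle : s j ≤ s j' := le_of_lt (hs hj')
        have hcol : (fun _ : Fin t => s j' + 1)
            = (fun _ : Fin t => s j + 1) + fun _ : Fin t => (((s j' - s j).toNat : ℕ) : ℤ) := by
          funext x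
          simp only [Pi.add_apply]
          omega
        rw [hcol]
        exact hGE_const (s j' - s j).toNat (s 0) _ _ h0
      have hBsj' : B < s j' := lt_of_le_of_lt (le_max_left B T) hsj'
      have hTsj' : T < s j' := lt_of_le_of_lt (le_max_right B T) hsj'
      have hlt : ∀ i : Fin N, μ i < μ' := fun i =>
        lt_of_le_of_lt (hB i) (lt_of_lt_of_le hBsj' hμ'ge)
      refine ⟨j', max B b', Fin.snoc μ μ', ?_, ?_, ?_, ?_⟩
      · intro i1 i2 h
        induction i1 using Fin.lastCases with
        | last =>
          induction i2 using Fin.lastCases with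
          | last => rfl
          | cast i2 =>
            rw [Fin.snoc_last, Fin.snoc_castSucc] at h
            exact absurd h.symm (ne_of_lt (hlt i2))
        | cast i1 =>
          induction i2 using Fin.lastCases with
          | last =>
            rw [Fin.snoc_last, Fin.snoc_castSucc] at h
            exact absurd h (ne_of_lt (hlt i1))
          | cast i2 =>
            rw [Fin.snoc_castSucc, Fin.snoc_castSucc] at h
            exact congrArg Fin.castSucc (hinj h)
      · intro i
        induction i using Fin.lastCases with
        | last =>
          rw [Fin.snoc_last]
          exact le_trans (le_of_lt hTsj') hμ'ge
        | cast i =>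
          rw [Fin.snoc_castSucc]
          exact hT1 i
      · intro i
        induction i using Fin.lastCases with
        | last =>
          rw [Fin.snoc_last]
          exact le_trans hμ'b (le_max_right _ _)
        | cast i =>
          rw [Fin.snoc_castSucc]
          exact le_trans (hB i) (le_max_left _ _)
      · intro i
        induction i using Fin.lastCases with
        | last =>
          rw [Fin.snoc_last]
          exact hnew
        | cast i =>
          rw [Fin.snoc_castSucc]
          exact hold i
  -- conclusion
  intro N
  obtain ⟨j, B, μ, hinj, hT1, hB, hGE⟩ := main N
  choose v hv0 hvW hvG using hGE
  have hlam_inj : Function.Injective (fun i : Fin N => q (μ i) - q (s 0)) := by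
    intro i1 i2 h
    simp only [sub_left_inj] at h
    exact hinj (hqinj _ _ (hT1 i1) (hT1 i2) h)
  have hindep : iSupIndep (fun i : Fin N => A.maxGenEigenspace (q (μ i) - q (s 0))) :=
    (Module.End.independent_maxGenEigenspace A).comp hlam_inj
  have hli : LinearIndependent ℂ v := hindep.linearIndependent _ hvG hv0
  refine ⟨s 0, (fun _ => s j + 1), ?_⟩
  haveI := hfd (s 0, fun _ => s j + 1)
  have hli2 : LinearIndependent ℂ
      (fun i : Fin N => (⟨v i, hvW i⟩ : W (s 0, fun _ => s j + 1))) := by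
    apply LinearIndependent.of_comp (W (s 0, fun _ => s j + 1)).subtype
    exact hli
  have hcard := hli2.fintype_card_le_finrank
  simpa using hcard
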